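/- Let M be an Orlicz function, 1 ≤ p < ∞ and m ≥ 1, n ≥ 1 integers. Then O_p(M, Δ_m^n) = { real sequences x = (x_k)_{k≥1} : there exists ρ > 0 with Σ_{i=1}^∞ (1/i)(Σ_{k=1}^{i} M(|Δ_m^n x_k|/ρ))^p < ∞ } is a complete metric space with respect to the metric f₄(x,y) = Σ_{r=1}^{mn} |x_r − y_r| + inf{ ρ > 0 : (Σ_{i=1}^∞ (1/i)(Σ_{k=1}^{i} M(|Δ_m^n x_k − Δ_m^n y_k|/ρ))^p)^{1/p} ≤ 1 }. -/

import Mathlib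

/-!
Statement 10 (Paper: Proposition 3.2(iv)).  `O_p(M, Δ_m^n)` is a complete
metric space with respect to the metric `f₄`.  Sequences are indexed so that
`x k` represents the paper's `x_{k+1}`.
-/

open scoped ENNReal

/-- An Orlicz function. -/
def IsOrliczFunction (M : ℝ → ℝ) : Prop :=
  ContinuousOn M (Set.Ici 0) ∧ MonotoneOn M (Set.Ici 0) ∧ ConvexOn ℝ (Set.Ici 0) M ∧
    M 0 = 0 ∧ (∀ x : ℝ, 0 < x → 0 < M x) ∧ Filter.Tendsto M Filter.atTop Filter.atTop

/-- The generalized difference operator. -/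
def delta (m : ℕ) : ℕ → (ℕ → ℝ) → ℕ → ℝ
  | 0, x => x
  | n + 1, x => fun k => delta m n x k - delta m n x (k + m)

/-- `∑_{i=1}^∞ (1/i) (∑_{k=1}^{i} M (|x_k| / ρ))^p`, valued in `ℝ≥0∞`. -/
noncomputable def opSum (M : ℝ → ℝ) (p : ℝ) (x : ℕ → ℝ) (ρ : ℝ) : ℝ≥0∞ :=
  ∑' i : ℕ, ENNReal.ofReal (1 / (i + 1 : ℝ)) *
    ENNReal.ofReal (∑ k ∈ Finset.range (i + 1), M (|x k| / ρ)) ^ p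

section Helpers

variable {M : ℝ → ℝ} {p : ℝ}

/-- The "unit ball" set of scales. -/
def Sgood (M : ℝ → ℝ) (p : ℝ) (z : ℕ → ℝ) : Set ℝ :=
  {ρ : ℝ | 0 < ρ ∧ (opSum M p z ρ) ^ (1 / p) ≤ 1}

lemma Mnonneg (hM : IsOrliczFunction M) {t : ℝ} (ht : 0 ≤ t) : 0 ≤ M t := by
  obtain ⟨-, Mmono, -, M0, -, -⟩ := hM
  have := Mmono (Set.self_mem_Ici) ht ht
  linarith [this, M0.le, M0.ge]

lemma rpow_le_one_iff' (hp : 1 ≤ p) {a : ℝ≥0∞} : a ^ (1 / p) ≤ 1 ↔ a ≤ 1 := by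
  have hp0 : (0:ℝ) < 1 / p := by positivity
  conv_lhs => rw [show (1:ℝ≥0∞) = 1 ^ (1/p) by simp]
  exact ENNReal.rpow_le_rpow_iff hp0

lemma opSum_congr_abs {x y : ℕ → ℝ} (h : ∀ k, |x k| = |y k|) (ρ : ℝ) :
    opSum M p x ρ = opSum M p y ρ := by
  unfold opSum
  refine tsum_congr fun i => ?_
  congr 2
  refine congrArg ENNReal.ofReal (Finset.sum_congr rfl fun k _ => ?_)
  rw [h k]

lemma Sgood_congr_abs {x y : ℕ → ℝ} (h : ∀ k, |x k| = |y k|) :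
    Sgood M p x = Sgood M p y := by
  ext ρ
  simp only [Sgood, Set.mem_setOf_eq, opSum_congr_abs h]

lemma opSum_anti (hM : IsOrliczFunction M) (hp : 1 ≤ p) (x : ℕ → ℝ) {ρ ρ' : ℝ}
    (hρ : 0 < ρ) (h : ρ ≤ ρ') : opSum M p x ρ' ≤ opSum M p x ρ := by
  obtain ⟨-, Mmono, -, -, -, -⟩ := hM
  refine ENNReal.tsum_le_tsum fun i => ?_
  refine mul_le_mul_right (ENNReal.rpow_le_rpow ?_ (by linarith)) _
  refine ENNReal.ofReal_le_ofReal (Finset.sum_le_sum fun k _ => ?_)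
  have hρ' : 0 < ρ' := lt_of_lt_of_le hρ h
  have h1 : |x k| / ρ' ≤ |x k| / ρ := by
    apply div_le_div_of_nonneg_left (abs_nonneg _) hρ h
  have h0' : (0:ℝ) ≤ |x k| / ρ' := by positivity
  have h0 : (0:ℝ) ≤ |x k| / ρ := by positivity
  exact Mmono h0' h0 h1

lemma Sgood_upward (hM : IsOrliczFunction M) (hp : 1 ≤ p) {x : ℕ → ℝ} {ρ ρ' : ℝ}
    (hρ : ρ ∈ Sgood M p x) (h : ρ ≤ ρ') : ρ' ∈ Sgood M p x := by
  obtain ⟨hρ0, hρ1⟩ := hρ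
  refine ⟨lt_of_lt_of_le hρ0 h, ?_⟩
  rw [rpow_le_one_iff' hp] at hρ1 ⊢
  exact le_trans (opSum_anti hM hp x hρ0 h) hρ1

end Helpers

section Helpers2

variable {M : ℝ → ℝ} {p : ℝ}

lemma M_convex_scale (hM : IsOrliczFunction M) {t lam : ℝ} (ht : 0 ≤ t) (h0 : 0 ≤ lam)
    (h1 : lam ≤ 1) : M (lam * t) ≤ lam * M t := by
  obtain ⟨-, -, Mconv, M0, -, -⟩ := hM
  have := Mconv.2 (Set.mem_Ici.2 ht) (Set.self_mem_Ici) h0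
    (by linarith : (0:ℝ) ≤ 1 - lam) (by ring : lam + (1 - lam) = 1)
  simpa [M0, smul_eq_mul] using this

lemma opSum_scale (hM : IsOrliczFunction M) (hp : 1 ≤ p) (x : ℕ → ℝ) {ρ c : ℝ}
    (hρ : 0 < ρ) (hc : 1 ≤ c) :
    opSum M p x (c * ρ) ≤ ENNReal.ofReal ((1 / c) ^ p) * opSum M p x ρ := by
  have hc0 : 0 < c := by linarith
  have hMnn := fun (t : ℝ) (ht : 0 ≤ t) => Mnonneg hM ht
  unfold opSum
  rw [← ENNReal.tsum_mul_left]
  refine ENNReal.tsum_le_tsum fun i => ?_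
  rw [← mul_assoc, mul_comm (ENNReal.ofReal ((1/c)^p)), mul_assoc]
  refine mul_le_mul_right ?_ _
  have hterm : ∀ k, M (|x k| / (c * ρ)) ≤ (1 / c) * M (|x k| / ρ) := by
    intro k
    have he : |x k| / (c * ρ) = (1 / c) * (|x k| / ρ) := by
      field_simp
    rw [he]
    exact M_convex_scale hM (by positivity) (by positivity) (by
      rw [div_le_one hc0]; linarith)
  have hsum : (∑ k ∈ Finset.range (i + 1), M (|x k| / (c * ρ))) ≤
      (1 / c) * ∑ k ∈ Finset.range (i + 1), M (|x k| / ρ) := by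
    rw [Finset.mul_sum]
    exact Finset.sum_le_sum fun k _ => hterm k
  calc ENNReal.ofReal (∑ k ∈ Finset.range (i + 1), M (|x k| / (c * ρ))) ^ p
      ≤ ENNReal.ofReal ((1 / c) * ∑ k ∈ Finset.range (i + 1), M (|x k| / ρ)) ^ p :=
        ENNReal.rpow_le_rpow (ENNReal.ofReal_le_ofReal hsum) (by linarith)
    _ = (ENNReal.ofReal (1 / c) * ENNReal.ofReal (∑ k ∈ Finset.range (i + 1), M (|x k| / ρ))) ^ p := by
        rw [ENNReal.ofReal_mul (by positivity)]
    _ = ENNReal.ofReal ((1 / c) ^ p) *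
        ENNReal.ofReal (∑ k ∈ Finset.range (i + 1), M (|x k| / ρ)) ^ p := by
        rw [ENNReal.mul_rpow_of_nonneg _ _ (by linarith : (0:ℝ) ≤ p),
          ← ENNReal.ofReal_rpow_of_pos (by positivity)]

lemma Sgood_nonempty (hM : IsOrliczFunction M) (hp : 1 ≤ p) {x : ℕ → ℝ} {ρ₀ : ℝ}
    (hρ₀ : 0 < ρ₀) (hfin : opSum M p x ρ₀ < ⊤) : (Sgood M p x).Nonempty := by
  set G : ℝ := (opSum M p x ρ₀).toReal with hG
  have hG0 : 0 ≤ G := ENNReal.toReal_nonneg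
  set c : ℝ := max 1 G with hcdef
  have hc1 : 1 ≤ c := le_max_left _ _
  have hc0 : 0 < c := by linarith
  refine ⟨c * ρ₀, by positivity, ?_⟩
  rw [rpow_le_one_iff' hp]
  calc opSum M p x (c * ρ₀) ≤ ENNReal.ofReal ((1 / c) ^ p) * opSum M p x ρ₀ :=
        opSum_scale hM hp x hρ₀ hc1
    _ = ENNReal.ofReal ((1 / c) ^ p) * ENNReal.ofReal G := by
        rw [hG, ENNReal.ofReal_toReal hfin.ne]
    _ = ENNReal.ofReal ((1 / c) ^ p * G) := by rw [ENNReal.ofReal_mul (by positivity)]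
    _ ≤ 1 := by
        rw [← ENNReal.ofReal_one]
        refine ENNReal.ofReal_le_ofReal ?_
        have h1c : (1 / c : ℝ) ≤ 1 := by rw [div_le_one hc0]; linarith
        have h1c0 : (0:ℝ) < 1 / c := by positivity
        have hpow : (1 / c : ℝ) ^ p ≤ (1 / c) ^ (1:ℝ) :=
          Real.rpow_le_rpow_of_exponent_ge h1c0 h1c hp
        have : (1 / c : ℝ) ^ p * G ≤ (1 / c) * G := by
          rw [Real.rpow_one] at hpow
          exact mul_le_mul_of_nonneg_right hpow hG0
        refine le_trans this ?_
        rw [div_mul_eq_mul_div, one_mul, div_le_one hc0]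
        exact le_max_right _ _

/-- Single-entry bound: membership in the unit ball bounds each `M (|x k| / ρ)`. -/
lemma M_bound_of_mem (hM : IsOrliczFunction M) (hp : 1 ≤ p) {x : ℕ → ℝ} {ρ : ℝ}
    (hρ : ρ ∈ Sgood M p x) (k : ℕ) : M (|x k| / ρ) ≤ ((k + 1 : ℝ)) ^ (1 / p) := by
  obtain ⟨hρ0, hle⟩ := hρ
  rw [rpow_le_one_iff' hp] at hle
  have hterm : ENNReal.ofReal (1 / (k + 1 : ℝ)) *
      ENNReal.ofReal (∑ j ∈ Finset.range (k + 1), M (|x j| / ρ)) ^ p ≤ 1 :=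
    le_trans (ENNReal.le_tsum k) hle
  have hk1 : (0:ℝ) < (k + 1 : ℝ) := by positivity
  have hA : ENNReal.ofReal (∑ j ∈ Finset.range (k + 1), M (|x j| / ρ)) ^ p ≤
      ENNReal.ofReal (k + 1 : ℝ) := by
    have hne : ENNReal.ofReal (1 / (k + 1 : ℝ)) ≠ 0 := by
      simp [ENNReal.ofReal_eq_zero]; positivity
    rw [mul_comm] at hterm
    rw [← ENNReal.le_div_iff_mul_le (Or.inl hne) (Or.inl ENNReal.ofReal_ne_top)] at hterm
    refine le_trans hterm ?_
    have heq : ENNReal.ofReal (1 / (k + 1 : ℝ)) = (ENNReal.ofReal (k + 1 : ℝ))⁻¹ := by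
      rw [one_div, ENNReal.ofReal_inv_of_pos hk1]
    rw [heq, one_div, inv_inv]
  have hA' : ENNReal.ofReal (∑ j ∈ Finset.range (k + 1), M (|x j| / ρ)) ≤
      ENNReal.ofReal ((k + 1 : ℝ) ^ (1 / p)) := by
    have hp0 : (0:ℝ) < 1 / p := by positivity
    have := ENNReal.rpow_le_rpow hA (le_of_lt hp0)
    rwa [← ENNReal.rpow_mul, mul_one_div, div_self (by linarith : p ≠ 0), ENNReal.rpow_one,
      ENNReal.ofReal_rpow_of_pos hk1] at this
  have hsum_le : (∑ j ∈ Finset.range (k + 1), M (|x j| / ρ)) ≤ (k + 1 : ℝ) ^ (1 / p) := by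
    have h2 : (0:ℝ) ≤ (k + 1 : ℝ) ^ (1 / p) := by positivity
    exact (ENNReal.ofReal_le_ofReal_iff h2).1 hA'
  refine le_trans ?_ hsum_le
  have : ∀ j ∈ Finset.range (k + 1), (0:ℝ) ≤ M (|x j| / ρ) := fun j _ =>
    Mnonneg hM (by positivity)
  exact Finset.single_le_sum this (Finset.self_mem_range_succ k)

/-- For each `k` there is a bound `T` such that `ρ ∈ Sgood x` implies `|x k| ≤ ρ * T`. -/
lemma coord_bound (hM : IsOrliczFunction M) (hp : 1 ≤ p) (k : ℕ) :
    ∃ T : ℝ, 0 < T ∧ ∀ (x : ℕ → ℝ) (ρ : ℝ), ρ ∈ Sgood M p x → |x k| ≤ ρ * T := by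
  have Mtop := hM.2.2.2.2.2
  obtain ⟨T, hT⟩ := (Filter.tendsto_atTop.1 Mtop ((k + 1 : ℝ) ^ (1 / p) + 1)).exists_forall_of_atTop
  refine ⟨max T 1, by positivity, fun x ρ hρ => ?_⟩
  have hρ0 := hρ.1
  by_contra hcon
  push_neg at hcon
  have h1 : max T 1 < |x k| / ρ := by
    rw [lt_div_iff₀ hρ0]; linarith [hcon]
  have h2 : (k + 1 : ℝ) ^ (1 / p) + 1 ≤ M (|x k| / ρ) :=
    hT _ (le_of_lt (lt_of_le_of_lt (le_max_left T 1) h1))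
  have h3 := M_bound_of_mem hM hp hρ k
  linarith

end Helpers2

section Minkowski

variable {M : ℝ → ℝ} {p : ℝ}

lemma Sgood_add (hM : IsOrliczFunction M) (hp : 1 ≤ p) {x y : ℕ → ℝ} {ρ₁ ρ₂ : ℝ}
    (hx : ρ₁ ∈ Sgood M p x) (hy : ρ₂ ∈ Sgood M p y) :
    ρ₁ + ρ₂ ∈ Sgood M p (fun k => x k + y k) := by
  obtain ⟨Mcont, Mmono, Mconv, M0, Mpos, Mtop⟩ := id hM
  obtain ⟨hρ₁, hx1⟩ := hx
  obtain ⟨hρ₂, hy1⟩ := hy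
  rw [rpow_le_one_iff' hp] at hx1 hy1
  have hσ : (0:ℝ) < ρ₁ + ρ₂ := by linarith
  set lam : ℝ := ρ₁ / (ρ₁ + ρ₂) with hlam
  have hlam0 : 0 ≤ lam := by positivity
  have hlam1 : lam ≤ 1 := by rw [hlam, div_le_one hσ]; linarith
  have hlam' : 1 - lam = ρ₂ / (ρ₁ + ρ₂) := by rw [hlam]; field_simp; ring
  refine ⟨hσ, ?_⟩
  have hp0 : (0:ℝ) < p := by linarith
  have hp0' : (0:ℝ) ≤ p := le_of_lt hp0
  -- pointwise bound
  have hpt : ∀ k, M (|x k + y k| / (ρ₁ + ρ₂)) ≤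
      lam * M (|x k| / ρ₁) + (1 - lam) * M (|y k| / ρ₂) := by
    intro k
    set u := |x k| / ρ₁ with hu
    set v := |y k| / ρ₂ with hv
    have hu0 : 0 ≤ u := by positivity
    have hv0 : 0 ≤ v := by positivity
    have harg : |x k + y k| / (ρ₁ + ρ₂) ≤ lam * u + (1 - lam) * v := by
      have h1 : |x k + y k| ≤ |x k| + |y k| := abs_add_le _ _
      have h2 : lam * u + (1 - lam) * v = (|x k| + |y k|) / (ρ₁ + ρ₂) := by
        rw [hlam', hlam, hu, hv]; field_simp
      rw [h2]
      exact div_le_div_of_nonneg_right h1 hσ.le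
    have hargnn : (0:ℝ) ≤ lam * u + (1 - lam) * v :=
      add_nonneg (mul_nonneg hlam0 hu0) (mul_nonneg (by linarith) hv0)
    have hmono := Mmono (Set.mem_Ici.2 (by positivity : (0:ℝ) ≤ |x k + y k| / (ρ₁ + ρ₂)))
      (Set.mem_Ici.2 hargnn) harg
    have hcvx := Mconv.2 (Set.mem_Ici.2 hu0) (Set.mem_Ici.2 hv0) hlam0
      (by linarith : (0:ℝ) ≤ 1 - lam) (by ring : lam + (1 - lam) = 1)
    simp only [smul_eq_mul] at hcvx
    exact le_trans hmono hcvx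
  -- abbreviations
  set w : ℕ → ℝ≥0∞ := fun i => ENNReal.ofReal (1 / (i + 1 : ℝ)) with hw
  set a : ℕ → ℝ≥0∞ := fun i =>
    ENNReal.ofReal (∑ k ∈ Finset.range (i + 1), M (|x k| / ρ₁)) with ha
  set b : ℕ → ℝ≥0∞ := fun i =>
    ENNReal.ofReal (∑ k ∈ Finset.range (i + 1), M (|y k| / ρ₂)) with hb
  set l : ℝ≥0∞ := ENNReal.ofReal lam with hl
  set l' : ℝ≥0∞ := ENNReal.ofReal (1 - lam) with hl'
  set F : ℕ → ℝ≥0∞ := fun i => w i ^ (1/p) * (l * a i) with hF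
  set G : ℕ → ℝ≥0∞ := fun i => w i ^ (1/p) * (l' * b i) with hG
  have hwpow : ∀ i, (w i ^ (1/p)) ^ p = w i := by
    intro i
    rw [← ENNReal.rpow_mul, one_div, inv_mul_cancel₀ (ne_of_gt hp0), ENNReal.rpow_one]
  have hMnnx : ∀ i, (0:ℝ) ≤ ∑ k ∈ Finset.range (i+1), M (|x k| / ρ₁) := fun i =>
    Finset.sum_nonneg fun k _ => Mnonneg hM (by positivity)
  have hMnny : ∀ i, (0:ℝ) ≤ ∑ k ∈ Finset.range (i+1), M (|y k| / ρ₂) := fun i =>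
    Finset.sum_nonneg fun k _ => Mnonneg hM (by positivity)
  -- step 1 : opSum ≤ ∑' (F+G)^p
  have step1 : opSum M p (fun k => x k + y k) (ρ₁ + ρ₂) ≤ ∑' i, (F i + G i) ^ p := by
    unfold opSum
    refine ENNReal.tsum_le_tsum fun i => ?_
    have hsum : (∑ k ∈ Finset.range (i + 1), M (|x k + y k| / (ρ₁ + ρ₂))) ≤
        lam * (∑ k ∈ Finset.range (i + 1), M (|x k| / ρ₁)) +
        (1 - lam) * (∑ k ∈ Finset.range (i + 1), M (|y k| / ρ₂)) := by
      rw [Finset.mul_sum, Finset.mul_sum, ← Finset.sum_add_distrib]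
      exact Finset.sum_le_sum fun k _ => hpt k
    have h1 : ENNReal.ofReal (∑ k ∈ Finset.range (i + 1), M (|x k + y k| / (ρ₁ + ρ₂))) ≤
        l * a i + l' * b i := by
      refine le_trans (ENNReal.ofReal_le_ofReal hsum) ?_
      refine le_trans (ENNReal.ofReal_add_le) ?_
      rw [ENNReal.ofReal_mul hlam0, ENNReal.ofReal_mul (by linarith : (0:ℝ) ≤ 1 - lam)]
    calc ENNReal.ofReal (1 / (i + 1 : ℝ)) *
          ENNReal.ofReal (∑ k ∈ Finset.range (i + 1), M (|x k + y k| / (ρ₁ + ρ₂))) ^ p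
        ≤ w i * (l * a i + l' * b i) ^ p := by
          exact mul_le_mul_right (ENNReal.rpow_le_rpow h1 hp0') _
      _ = (F i + G i) ^ p := by
          rw [hF, hG, ← mul_add, ENNReal.mul_rpow_of_nonneg _ _ hp0', hwpow]
  -- step 2 : Minkowski via counting measure
  have step2 : (∑' i, (F i + G i) ^ p) ^ (1/p) ≤
      (∑' i, F i ^ p) ^ (1/p) + (∑' i, G i ^ p) ^ (1/p) := by
    have hFG : ∀ i, (F i + G i) ^ p = ((F + G) i) ^ p := fun i => rfl
    have h1 : (∑' i, (F i + G i) ^ p) = ∫⁻ i, ((F + G) i) ^ p ∂(MeasureTheory.Measure.count) := by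
      rw [MeasureTheory.lintegral_count]
      exact tsum_congr fun i => rfl
    have h2 : (∑' i, F i ^ p) = ∫⁻ i, F i ^ p ∂(MeasureTheory.Measure.count) := by
      rw [MeasureTheory.lintegral_count]
    have h3 : (∑' i, G i ^ p) = ∫⁻ i, G i ^ p ∂(MeasureTheory.Measure.count) := by
      rw [MeasureTheory.lintegral_count]
    rw [h1, h2, h3]
    exact ENNReal.lintegral_Lp_add_le (measurable_of_countable F).aemeasurable
      (measurable_of_countable G).aemeasurable hp
  -- step 3 : the two Lp norms
  have hppinv : p * (1/p) = 1 := by field_simp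
  have step3 : (∑' i, F i ^ p) ^ (1/p) ≤ l := by
    have h1 : ∀ i, F i ^ p = l ^ p * (w i * a i ^ p) := by
      intro i
      rw [hF, ENNReal.mul_rpow_of_nonneg _ _ hp0', ENNReal.mul_rpow_of_nonneg _ _ hp0', hwpow]
      ring
    have h2 : (∑' i, F i ^ p) = l ^ p * opSum M p x ρ₁ := by
      simp only [h1]
      rw [ENNReal.tsum_mul_left]
      rfl
    rw [h2]
    calc (l ^ p * opSum M p x ρ₁) ^ (1/p) ≤ (l ^ p * 1) ^ (1/p) :=
          ENNReal.rpow_le_rpow (mul_le_mul_right hx1 _) (by positivity)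
      _ = l := by rw [mul_one, ← ENNReal.rpow_mul, hppinv, ENNReal.rpow_one]
  have step4 : (∑' i, G i ^ p) ^ (1/p) ≤ l' := by
    have h1 : ∀ i, G i ^ p = l' ^ p * (w i * b i ^ p) := by
      intro i
      rw [hG, ENNReal.mul_rpow_of_nonneg _ _ hp0', ENNReal.mul_rpow_of_nonneg _ _ hp0', hwpow]
      ring
    have h2 : (∑' i, G i ^ p) = l' ^ p * opSum M p y ρ₂ := by
      simp only [h1]
      rw [ENNReal.tsum_mul_left]
      rfl
    rw [h2]
    calc (l' ^ p * opSum M p y ρ₂) ^ (1/p) ≤ (l' ^ p * 1) ^ (1/p) :=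
          ENNReal.rpow_le_rpow (mul_le_mul_right hy1 _) (by positivity)
      _ = l' := by rw [mul_one, ← ENNReal.rpow_mul, hppinv, ENNReal.rpow_one]
  have hll' : l + l' = 1 := by
    rw [hl, hl', ← ENNReal.ofReal_add hlam0 (by linarith), add_sub_cancel, ENNReal.ofReal_one]
  calc (opSum M p (fun k => x k + y k) (ρ₁ + ρ₂)) ^ (1/p)
      ≤ (∑' i, (F i + G i) ^ p) ^ (1/p) := ENNReal.rpow_le_rpow step1 (by positivity)
    _ ≤ (∑' i, F i ^ p) ^ (1/p) + (∑' i, G i ^ p) ^ (1/p) := step2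
    _ ≤ l + l' := add_le_add step3 step4
    _ = 1 := hll'

end Minkowski

section Delta

lemma delta_sub (m n : ℕ) (x y : ℕ → ℝ) :
    ∀ k, delta m n (fun j => x j - y j) k = delta m n x k - delta m n y k := by
  induction n with
  | zero => intro k; rfl
  | succ n ih => intro k; simp only [delta, ih]; ring

lemma delta_succ' (m n : ℕ) (x : ℕ → ℝ) :
    ∀ k, delta m (n + 1) x k = delta m n (delta m 1 x) k := by
  induction n with
  | zero => intro k; rfl
  | succ n ih =>
    intro k
    show delta m (n + 1) x k - delta m (n + 1) x (k + m) =
      delta m n (delta m 1 x) k - delta m n (delta m 1 x) (k + m)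
    rw [ih k, ih (k + m)]

lemma delta_eq_zero_forall (m : ℕ) (hm : 1 ≤ m) :
    ∀ (n : ℕ) (x : ℕ → ℝ), (∀ r < m * n, x r = 0) → (∀ k, delta m n x k = 0) →
      ∀ i, x i = 0 := by
  intro n
  induction n with
  | zero => intro x _ hd i; exact hd i
  | succ n ih =>
    intro x hr hd
    set v : ℕ → ℝ := delta m 1 x with hv
    have hvr : ∀ r < m * n, v r = 0 := by
      intro r hrn
      have h1 : r < m * (n + 1) := lt_of_lt_of_le hrn (by nlinarith)
      have h2 : r + m < m * (n + 1) := by nlinarith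
      show x r - x (r + m) = 0
      rw [hr r h1, hr _ h2, sub_zero]
    have hdv : ∀ k, delta m n v k = 0 := fun k => by
      rw [← delta_succ' m n x k]; exact hd k
    have hvzero : ∀ k, v k = 0 := ih v hvr hdv
    intro i
    induction i using Nat.strong_induction_on with
    | _ i ihs =>
      by_cases hcase : i < m * (n + 1)
      · exact hr i hcase
      · push_neg at hcase
        have him : m ≤ i := le_trans (by nlinarith) hcase
        have hsub : i - m < i := Nat.sub_lt (by omega) (by omega)
        have hx : x ((i - m) + m) = x (i - m) - v (i - m) := by
          show x ((i-m)+m) = x (i-m) - (x (i-m) - x ((i-m)+m)); ring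
        rw [show i = (i - m) + m by omega, hx, ihs _ hsub, hvzero, sub_zero]

lemma delta_tendsto_lim {m n : ℕ} {u : ℕ → ℕ → ℝ} {x : ℕ → ℝ}
    (h : ∀ i, Filter.Tendsto (fun s => u s i) Filter.atTop (nhds (x i))) :
    ∀ k, Filter.Tendsto (fun s => delta m n (u s) k) Filter.atTop (nhds (delta m n x k)) := by
  induction n with
  | zero => exact h
  | succ n ih =>
    intro k
    exact ((ih k).sub (ih (k + m)))

lemma exists_lim_of_delta_lim (m : ℕ) (hm : 1 ≤ m) :
    ∀ (n : ℕ) (u : ℕ → ℕ → ℝ),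
      (∀ r < m * n, ∃ L, Filter.Tendsto (fun s => u s r) Filter.atTop (nhds L)) →
      (∀ k, ∃ L, Filter.Tendsto (fun s => delta m n (u s) k) Filter.atTop (nhds L)) →
      ∀ i, ∃ L, Filter.Tendsto (fun s => u s i) Filter.atTop (nhds L) := by
  intro n
  induction n with
  | zero => intro u _ hd i; exact hd i
  | succ n ih =>
    intro u hr hd
    set v : ℕ → ℕ → ℝ := fun s => delta m 1 (u s) with hv
    have hvr : ∀ r < m * n, ∃ L, Filter.Tendsto (fun s => v s r) Filter.atTop (nhds L) := by
      intro r hrn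
      have h1 : r < m * (n + 1) := lt_of_lt_of_le hrn (by nlinarith)
      have h2 : r + m < m * (n + 1) := by nlinarith
      obtain ⟨L1, hL1⟩ := hr r h1
      obtain ⟨L2, hL2⟩ := hr _ h2
      exact ⟨L1 - L2, hL1.sub hL2⟩
    have hdv : ∀ k, ∃ L, Filter.Tendsto (fun s => delta m n (v s) k) Filter.atTop (nhds L) := by
      intro k
      obtain ⟨L, hL⟩ := hd k
      refine ⟨L, ?_⟩
      have : ∀ s, delta m n (v s) k = delta m (n + 1) (u s) k := fun s =>
        (delta_succ' m n (u s) k).symm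
      simpa only [this] using hL
    have hvlim : ∀ k, ∃ L, Filter.Tendsto (fun s => v s k) Filter.atTop (nhds L) := ih v hvr hdv
    intro i
    induction i using Nat.strong_induction_on with
    | _ i ihs =>
      by_cases hcase : i < m * (n + 1)
      · exact hr i hcase
      · push_neg at hcase
        have him : m ≤ i := le_trans (by nlinarith) hcase
        have hsub : i - m < i := Nat.sub_lt (by omega) (by omega)
        obtain ⟨L1, hL1⟩ := ihs _ hsub
        obtain ⟨L2, hL2⟩ := hvlim (i - m)
        refine ⟨L1 - L2, ?_⟩
        have : ∀ s, u s i = u s (i - m) - v s (i - m) := by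
          intro s
          have : v s (i - m) = u s (i - m) - u s ((i - m) + m) := rfl
          rw [this, show (i - m) + m = i by omega]; ring
        simpa only [this] using hL1.sub hL2

end Delta

section Fatou

variable {M : ℝ → ℝ} {p : ℝ}

/-- Fatou-type lower semicontinuity of `opSum` under pointwise convergence. -/
lemma opSum_le_liminf (hM : IsOrliczFunction M) (hp : 1 ≤ p) {z : ℕ → ℕ → ℝ} {zl : ℕ → ℝ}
    {ρ : ℝ} (hρ : 0 < ρ)
    (hz : ∀ k, Filter.Tendsto (fun t => z t k) Filter.atTop (nhds (zl k))) :
    opSum M p zl ρ ≤ Filter.liminf (fun t => opSum M p (z t) ρ) Filter.atTop := by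
  obtain ⟨Mcont, Mmono, Mconv, M0, Mpos, Mtop⟩ := id hM
  have hp0' : (0:ℝ) ≤ p := by linarith
  set f : ℕ → ℕ → ℝ≥0∞ := fun t i => ENNReal.ofReal (1 / (i + 1 : ℝ)) *
    ENNReal.ofReal (∑ k ∈ Finset.range (i + 1), M (|z t k| / ρ)) ^ p with hf
  have hterm : ∀ i, Filter.Tendsto (fun t => f t i) Filter.atTop
      (nhds (ENNReal.ofReal (1 / (i + 1 : ℝ)) *
        ENNReal.ofReal (∑ k ∈ Finset.range (i + 1), M (|zl k| / ρ)) ^ p)) := by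
    intro i
    have hMk : ∀ k, Filter.Tendsto (fun t => M (|z t k| / ρ)) Filter.atTop
        (nhds (M (|zl k| / ρ))) := by
      intro k
      have harg : Filter.Tendsto (fun t => |z t k| / ρ) Filter.atTop (nhds (|zl k| / ρ)) :=
        ((hz k).abs).div_const ρ
      have hmem : ∀ t, |z t k| / ρ ∈ Set.Ici (0:ℝ) := fun t => Set.mem_Ici.2 (by positivity)
      have hq : |zl k| / ρ ∈ Set.Ici (0:ℝ) := Set.mem_Ici.2 (by positivity)
      have hwithin : Filter.Tendsto (fun t => |z t k| / ρ) Filter.atTop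
          (nhdsWithin (|zl k| / ρ) (Set.Ici 0)) :=
        tendsto_nhdsWithin_of_tendsto_nhds_of_eventually_within _ harg
          (Filter.Eventually.of_forall hmem)
      exact (Mcont _ hq).tendsto.comp hwithin
    have hsum : Filter.Tendsto (fun t => ∑ k ∈ Finset.range (i + 1), M (|z t k| / ρ))
        Filter.atTop (nhds (∑ k ∈ Finset.range (i + 1), M (|zl k| / ρ))) :=
      tendsto_finset_sum _ fun k _ => hMk k
    have hof : Filter.Tendsto (fun t => ENNReal.ofReal
        (∑ k ∈ Finset.range (i + 1), M (|z t k| / ρ))) Filter.atTop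
        (nhds (ENNReal.ofReal (∑ k ∈ Finset.range (i + 1), M (|zl k| / ρ)))) :=
      (ENNReal.continuous_ofReal.tendsto _).comp hsum
    have hrpow := ((ENNReal.continuous_rpow_const (y := p)).tendsto _).comp hof
    exact ENNReal.Tendsto.const_mul hrpow (Or.inr ENNReal.ofReal_ne_top)
  have heq : ∀ i : ℕ, ENNReal.ofReal (1 / (i + 1 : ℝ)) *
      ENNReal.ofReal (∑ k ∈ Finset.range (i + 1), M (|zl k| / ρ)) ^ p =
      Filter.liminf (fun t => f t i) Filter.atTop := fun i => ((hterm i).liminf_eq).symm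
  calc opSum M p zl ρ = ∑' i, Filter.liminf (fun t => f t i) Filter.atTop := by
        unfold opSum; exact tsum_congr heq
    _ = ∫⁻ i, Filter.liminf (fun t => f t i) Filter.atTop ∂MeasureTheory.Measure.count := by
        rw [MeasureTheory.lintegral_count]
    _ ≤ Filter.liminf (fun t => ∫⁻ i, f t i ∂MeasureTheory.Measure.count) Filter.atTop :=
        MeasureTheory.lintegral_liminf_le fun t => measurable_of_countable _
    _ = Filter.liminf (fun t => opSum M p (z t) ρ) Filter.atTop := by
        refine Filter.liminf_congr (Filter.Eventually.of_forall fun t => ?_)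
        rw [MeasureTheory.lintegral_count]
        rfl

end Fatou

/-- The space `O_p(M, Δ_m^n)`. -/
def OpMDelta (M : ℝ → ℝ) (p : ℝ) (m n : ℕ) : Set (ℕ → ℝ) :=
  {x | ∃ ρ > 0, opSum M p (delta m n x) ρ < ⊤}

/-- The metric `f₄`. -/
noncomputable def f4 (M : ℝ → ℝ) (p : ℝ) (m n : ℕ) (x y : ℕ → ℝ) : ℝ :=
  (∑ r ∈ Finset.range (m * n), |x r - y r|) +
    sInf {ρ : ℝ | 0 < ρ ∧
      (opSum M p (fun k => delta m n x k - delta m n y k) ρ) ^ (1 / p) ≤ 1}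

theorem OpDelta_complete_metric (M : ℝ → ℝ) (hM : IsOrliczFunction M) (p : ℝ) (hp : 1 ≤ p)
    (m n : ℕ) (hm : 1 ≤ m) (hn : 1 ≤ n) :
    ∃ inst : MetricSpace (OpMDelta M p m n),
      (∀ a b : OpMDelta M p m n, @dist _ inst.toDist a b = f4 M p m n a.1 b.1) ∧
        @CompleteSpace _ inst.toUniformSpace := by
  have hp0 : (0:ℝ) < p := by linarith
  -- notation
  set X := OpMDelta M p m n with hX
  have hf4 : ∀ x y : ℕ → ℝ, f4 M p m n x y =
      (∑ r ∈ Finset.range (m * n), |x r - y r|) +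
      sInf (Sgood M p (fun k => delta m n x k - delta m n y k)) := fun x y => rfl
  have hbdd : ∀ z : ℕ → ℝ, BddBelow (Sgood M p z) := fun z => ⟨0, fun ρ hρ => hρ.1.le⟩
  have hNnn : ∀ z : ℕ → ℝ, 0 ≤ sInf (Sgood M p z) := fun z =>
    Real.sInf_nonneg fun ρ hρ => hρ.1.le
  have hsum_nn : ∀ x y : ℕ → ℝ, 0 ≤ ∑ r ∈ Finset.range (m * n), |x r - y r| := fun x y =>
    Finset.sum_nonneg fun r _ => abs_nonneg _
  -- nonemptiness of Sgood for members
  have hSne : ∀ x y : ℕ → ℝ, x ∈ X → y ∈ X →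
      (Sgood M p (fun k => delta m n x k - delta m n y k)).Nonempty := by
    intro x y hx hy
    obtain ⟨ρx, hρx, hfx⟩ := hx
    obtain ⟨ρy, hρy, hfy⟩ := hy
    obtain ⟨ρ₁, hρ₁⟩ := Sgood_nonempty hM hp hρx hfx
    obtain ⟨ρ₂, hρ₂⟩ := Sgood_nonempty hM hp hρy hfy
    have hρ₂' : ρ₂ ∈ Sgood M p (fun k => -(delta m n y k)) := by
      rwa [Sgood_congr_abs (fun k => abs_neg (delta m n y k))]
    have := Sgood_add hM hp hρ₁ hρ₂'
    have hfe : (fun k => delta m n x k + -(delta m n y k)) =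
        (fun k => delta m n x k - delta m n y k) := funext fun k => by ring
    rw [hfe] at this
    exact ⟨ρ₁ + ρ₂, this⟩
  -- coordinate extraction from Sgood
  have hcoordlim : ∀ k : ℕ, ∃ T : ℝ, 0 < T ∧ ∀ (z : ℕ → ℝ) (ρ : ℝ),
      ρ ∈ Sgood M p z → |z k| ≤ ρ * T := fun k => coord_bound hM hp k
  -- distance function
  set d : X → X → ℝ := fun a b => f4 M p m n a.1 b.1 with hd
  have hd_self : ∀ a : X, d a a = 0 := by
    intro a
    rw [hd]; dsimp only; rw [hf4]
    have h1 : (∑ r ∈ Finset.range (m * n), |a.1 r - a.1 r|) = 0 := by simp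
    have h2 : Sgood M p (fun k => delta m n a.1 k - delta m n a.1 k) = Set.Ioi 0 := by
      ext ρ
      simp only [Sgood, Set.mem_setOf_eq, Set.mem_Ioi]
      constructor
      · exact fun h => h.1
      · intro hρ
        refine ⟨hρ, ?_⟩
        have hz : opSum M p (fun k => delta m n a.1 k - delta m n a.1 k) ρ = 0 := by
          unfold opSum
          have : ∀ i : ℕ, ENNReal.ofReal (1 / (i + 1 : ℝ)) *
              ENNReal.ofReal (∑ k ∈ Finset.range (i + 1),
                M (|delta m n a.1 k - delta m n a.1 k| / ρ)) ^ p = 0 := by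
            intro i
            have : (∑ k ∈ Finset.range (i + 1),
                M (|delta m n a.1 k - delta m n a.1 k| / ρ)) = 0 := by
              refine Finset.sum_eq_zero fun k _ => ?_
              simp [hM.2.2.2.1]
            rw [this, ENNReal.ofReal_zero, ENNReal.zero_rpow_of_pos hp0, mul_zero]
          rw [tsum_congr this]; simp
        rw [hz, ENNReal.zero_rpow_of_pos (by positivity)]
        exact zero_le_one
    rw [h1, h2, csInf_Ioi, zero_add]
  have hd_comm : ∀ a b : X, d a b = d b a := by
    intro a b
    rw [hd]; dsimp only; rw [hf4, hf4]
    congr 1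
    · exact Finset.sum_congr rfl fun r _ => abs_sub_comm _ _
    · rw [Sgood_congr_abs (fun k => abs_sub_comm (delta m n a.1 k) (delta m n b.1 k))]
  have hd_triangle : ∀ a b c : X, d a c ≤ d a b + d b c := by
    intro a b c
    rw [hd]; dsimp only; rw [hf4, hf4, hf4]
    have hsum : (∑ r ∈ Finset.range (m * n), |a.1 r - c.1 r|) ≤
        (∑ r ∈ Finset.range (m * n), |a.1 r - b.1 r|) +
        (∑ r ∈ Finset.range (m * n), |b.1 r - c.1 r|) := by
      rw [← Finset.sum_add_distrib]
      refine Finset.sum_le_sum fun r _ => ?_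
      have := abs_sub_le (a.1 r) (b.1 r) (c.1 r)
      linarith
    have hN : sInf (Sgood M p (fun k => delta m n a.1 k - delta m n c.1 k)) ≤
        sInf (Sgood M p (fun k => delta m n a.1 k - delta m n b.1 k)) +
        sInf (Sgood M p (fun k => delta m n b.1 k - delta m n c.1 k)) := by
      refine le_of_forall_pos_le_add fun ε hε => ?_
      have hA := hSne a.1 b.1 a.2 b.2
      have hB := hSne b.1 c.1 b.2 c.2
      obtain ⟨ρ₁, hρ₁, hρ₁lt⟩ := exists_lt_of_csInf_lt hA
        (lt_add_of_pos_right _ (by linarith : (0:ℝ) < ε/2))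
      obtain ⟨ρ₂, hρ₂, hρ₂lt⟩ := exists_lt_of_csInf_lt hB
        (lt_add_of_pos_right _ (by linarith : (0:ℝ) < ε/2))
      have hadd := Sgood_add hM hp hρ₁ hρ₂
      have hfe : (fun k => (delta m n a.1 k - delta m n b.1 k) +
          (delta m n b.1 k - delta m n c.1 k)) =
          (fun k => delta m n a.1 k - delta m n c.1 k) := funext fun k => by ring
      rw [hfe] at hadd
      have := csInf_le (hbdd _) hadd
      linarith
    linarith
  have hd_eq : ∀ a b : X, d a b = 0 → a = b := by
    intro a b hab
    rw [hd] at hab; dsimp only at hab; rw [hf4] at hab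
    have h1 : (∑ r ∈ Finset.range (m * n), |a.1 r - b.1 r|) = 0 := by
      have := hNnn (fun k => delta m n a.1 k - delta m n b.1 k)
      have := hsum_nn a.1 b.1
      linarith
    have h2 : sInf (Sgood M p (fun k => delta m n a.1 k - delta m n b.1 k)) = 0 := by
      have := hsum_nn a.1 b.1
      have := hNnn (fun k => delta m n a.1 k - delta m n b.1 k)
      linarith
    have hr0 : ∀ r < m * n, a.1 r - b.1 r = 0 := by
      intro r hr
      have hz := (Finset.sum_eq_zero_iff_of_nonneg
        (fun r _ => abs_nonneg (a.1 r - b.1 r))).1 h1 r (Finset.mem_range.2 hr)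
      exact abs_eq_zero.1 hz
    have hdz : ∀ k, delta m n a.1 k - delta m n b.1 k = 0 := by
      intro k
      obtain ⟨T, hT0, hTb⟩ := hcoordlim k
      have habs : ∀ ε > (0:ℝ), |delta m n a.1 k - delta m n b.1 k| ≤ ε := by
        intro ε hε
        obtain ⟨ρ, hρ, hρlt⟩ := exists_lt_of_csInf_lt (hSne a.1 b.1 a.2 b.2)
          (h2 ▸ (by positivity : (0:ℝ) < ε / T))
        have := hTb _ ρ hρ
        calc |delta m n a.1 k - delta m n b.1 k| ≤ ρ * T := this
          _ ≤ (ε / T) * T := by nlinarith [hρ.1]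
          _ = ε := by field_simp
      have : |delta m n a.1 k - delta m n b.1 k| ≤ 0 :=
        le_of_forall_pos_le_add (by intro ε hε; simpa using habs ε hε)
      have := abs_nonneg (delta m n a.1 k - delta m n b.1 k)
      exact abs_eq_zero.1 (le_antisymm ‹_› ‹_›)
    have hall : ∀ i, a.1 i - b.1 i = 0 := by
      have hds : ∀ k, delta m n (fun j => a.1 j - b.1 j) k = 0 := by
        intro k; rw [delta_sub]; exact hdz k
      exact delta_eq_zero_forall m hm n (fun j => a.1 j - b.1 j)
        (fun r hr => hr0 r hr) hds
    exact Subtype.ext (funext fun i => by linarith [hall i])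
  letI pm : PseudoMetricSpace X :=
    { dist := d, dist_self := hd_self, dist_comm := hd_comm, dist_triangle := hd_triangle }
  letI ms : MetricSpace X := { pm with eq_of_dist_eq_zero := hd_eq _ _ }
  refine ⟨ms, fun a b => rfl, ?_⟩
  refine Metric.complete_of_cauchySeq_tendsto fun u hu => ?_
  have hCau := Metric.cauchySeq_iff.1 hu
  have hdist : ∀ s t : ℕ, dist (u s) (u t) =
      (∑ r ∈ Finset.range (m * n), |(u s).1 r - (u t).1 r|) +
      sInf (Sgood M p (fun k => delta m n (u s).1 k - delta m n (u t).1 k)) := fun s t => rfl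
  have hconv : ∀ v : ℕ → ℝ, (∀ ε > (0:ℝ), ∃ N, ∀ s ≥ N, ∀ t ≥ N, |v s - v t| < ε) →
      ∃ L, Filter.Tendsto v Filter.atTop (nhds L) := by
    intro v hv
    have : CauchySeq v := Metric.cauchySeq_iff.2 (by simpa [Real.dist_eq] using hv)
    exact cauchySeq_tendsto_of_complete this
  have hrlim : ∀ r, r < m * n → ∃ L, Filter.Tendsto (fun s => (u s).1 r) Filter.atTop (nhds L) := by
    intro r hr
    refine hconv _ fun ε hε => ?_
    obtain ⟨N, hN⟩ := hCau ε hε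
    refine ⟨N, fun s hs t ht => ?_⟩
    have h1 := hN s hs t ht
    rw [hdist] at h1
    have h2 : |(u s).1 r - (u t).1 r| ≤
        ∑ j ∈ Finset.range (m * n), |(u s).1 j - (u t).1 j| :=
      Finset.single_le_sum (f := fun j => |(u s).1 j - (u t).1 j|)
        (fun j _ => abs_nonneg _) (Finset.mem_range.2 hr)
    have := hNnn (fun k => delta m n (u s).1 k - delta m n (u t).1 k)
    linarith
  have hklim : ∀ k, ∃ L, Filter.Tendsto (fun s => delta m n (u s).1 k)
      Filter.atTop (nhds L) := by
    intro k
    obtain ⟨T, hT0, hTb⟩ := hcoordlim k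
    refine hconv _ fun ε hε => ?_
    have hεT : (0:ℝ) < ε / (2 * T) := by positivity
    obtain ⟨N, hN⟩ := hCau (ε / (2 * T)) hεT
    refine ⟨N, fun s hs t ht => ?_⟩
    have h1 := hN s hs t ht
    rw [hdist] at h1
    have hlt : sInf (Sgood M p (fun j => delta m n (u s).1 j - delta m n (u t).1 j)) <
        ε / (2 * T) := by
      have := hsum_nn (u s).1 (u t).1
      linarith
    obtain ⟨ρ, hρ, hρlt⟩ := exists_lt_of_csInf_lt (hSne _ _ (u s).2 (u t).2) hlt
    have hb := hTb _ ρ hρ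
    calc |delta m n (u s).1 k - delta m n (u t).1 k| ≤ ρ * T := hb
      _ < (ε / (2 * T)) * T := by nlinarith [hρ.1]
      _ = ε / 2 := by field_simp
      _ < ε := by linarith
  have hall : ∀ i, ∃ L, Filter.Tendsto (fun s => (u s).1 i) Filter.atTop (nhds L) :=
    exists_lim_of_delta_lim m hm n (fun s => (u s).1) hrlim hklim
  choose x hxlim using hall
  have hdlim := delta_tendsto_lim (m := m) (n := n) hxlim
  have hkey : ∀ ε > (0:ℝ), ∃ N, ∀ s ≥ N,
      ε ∈ Sgood M p (fun k => delta m n (u s).1 k - delta m n x k) := by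
    intro ε hε
    obtain ⟨N, hN⟩ := hCau ε hε
    refine ⟨N, fun s hs => ?_⟩
    have hbound : ∀ t, N ≤ t →
        opSum M p (fun k => delta m n (u s).1 k - delta m n (u t).1 k) ε ≤ 1 := by
      intro t ht
      have h1 := hN s hs t ht
      rw [hdist] at h1
      have hlt : sInf (Sgood M p (fun k => delta m n (u s).1 k - delta m n (u t).1 k)) < ε := by
        have := hsum_nn (u s).1 (u t).1
        linarith
      obtain ⟨ρ, hρ, hρlt⟩ := exists_lt_of_csInf_lt (hSne _ _ (u s).2 (u t).2) hlt
      have hup := Sgood_upward hM hp hρ hρlt.le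
      exact (rpow_le_one_iff' hp).1 hup.2
    have hzlim : ∀ k, Filter.Tendsto
        (fun t => delta m n (u s).1 k - delta m n (u t).1 k) Filter.atTop
        (nhds (delta m n (u s).1 k - delta m n x k)) := fun k =>
      tendsto_const_nhds.sub (hdlim k)
    have hfatou := opSum_le_liminf hM hp hε hzlim
    have hliminf : Filter.liminf
        (fun t => opSum M p (fun k => delta m n (u s).1 k - delta m n (u t).1 k) ε)
        Filter.atTop ≤ 1 := by
      refine le_trans Filter.liminf_le_limsup ?_
      exact Filter.limsup_le_of_le (h := Filter.eventually_atTop.2 ⟨N, hbound⟩)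
    exact ⟨hε, (rpow_le_one_iff' hp).2 (le_trans hfatou hliminf)⟩
  have hxmem : x ∈ X := by
    obtain ⟨N₁, hN₁⟩ := hkey 1 one_pos
    have h1 := hN₁ N₁ le_rfl
    have h1' : (1:ℝ) ∈ Sgood M p (fun k => delta m n x k - delta m n (u N₁).1 k) := by
      rwa [Sgood_congr_abs (fun k => abs_sub_comm (delta m n x k) (delta m n (u N₁).1 k))]
    obtain ⟨ρ₀, hρ₀, hfin⟩ := (u N₁).2
    obtain ⟨ρ₁, hρ₁⟩ := Sgood_nonempty hM hp hρ₀ hfin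
    have hadd := Sgood_add hM hp hρ₁ h1'
    have hfe : (fun k => delta m n (u N₁).1 k +
        (delta m n x k - delta m n (u N₁).1 k)) = delta m n x := funext fun k => by ring
    rw [hfe] at hadd
    exact ⟨ρ₁ + 1, hadd.1,
      lt_of_le_of_lt ((rpow_le_one_iff' hp).1 hadd.2) ENNReal.one_lt_top⟩
  refine ⟨⟨x, hxmem⟩, ?_⟩
  rw [Metric.tendsto_atTop]
  intro ε hε
  have hε4 : (0:ℝ) < ε / 4 := by linarith
  obtain ⟨N₂, hN₂⟩ := hkey (ε / 4) hε4
  obtain ⟨N₃, hN₃⟩ := hCau (ε / 4) hε4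
  refine ⟨max N₂ N₃, fun s hs => ?_⟩
  have hs2 : N₂ ≤ s := le_trans (le_max_left _ _) hs
  have hs3 : N₃ ≤ s := le_trans (le_max_right _ _) hs
  have hNpart : sInf (Sgood M p (fun k => delta m n (u s).1 k - delta m n x k)) ≤ ε / 4 :=
    csInf_le (hbdd _) (hN₂ s hs2)
  have hsumpart : (∑ r ∈ Finset.range (m * n), |(u s).1 r - x r|) ≤ ε / 4 := by
    have htends : Filter.Tendsto
        (fun t => ∑ r ∈ Finset.range (m * n), |(u s).1 r - (u t).1 r|) Filter.atTop
        (nhds (∑ r ∈ Finset.range (m * n), |(u s).1 r - x r|)) :=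
      tendsto_finset_sum _ fun r _ => ((tendsto_const_nhds.sub (hxlim r)).abs)
    refine le_of_tendsto htends (Filter.eventually_atTop.2 ⟨N₃, fun t ht => ?_⟩)
    have h1 := hN₃ s hs3 t ht
    rw [hdist] at h1
    have := hNnn (fun k => delta m n (u s).1 k - delta m n (u t).1 k)
    linarith
  have hde : dist (u s) (⟨x, hxmem⟩ : X) =
      (∑ r ∈ Finset.range (m * n), |(u s).1 r - x r|) +
      sInf (Sgood M p (fun k => delta m n (u s).1 k - delta m n x k)) := rfl
  rw [hde]
  linarith
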